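/- Let H be a Hopf algebra with antipode S, and let v = (v^μ_ν) ∈ M_n(H) be a matrix such that Δ(v^μ_ν) = Σ_λ v^μ_λ ⊗ v^λ_ν and ε(v^μ_ν) = δ^μ_ν. Suppose Σ w_{ρ₁...ρ_m} v^{ρ₁}_{λ₁} ⋯ v^{ρ_m}_{λ_m} = w_{λ₁...λ_m}·1 for all indices, where w is an m-linear form satisfying condition (i), with polar element w̃ satisfying Σ w̃^{μ λ₁...λ_{m-1}} w_{λ₁...λ_{m-1}ν} = δ^μ_ν. Then S(v^μ_ν) = Σ w̃^{μ λ₁...λ_{m-1}} v^{ρ₁}_{λ₁} ⋯ v^{ρ_{m-1}}_{λ_{m-1}} w_{ρ₁...ρ_{m-1} ν} for all μ, ν. -/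
import Mathlib


open TensorProduct

/-- If a Hopf algebra `H` has a multiplicative matrix `v` preserving a
multilinear form `w` which admits a polar element `w̃`, then the antipode is given by
`S(v^μ_ν) = Σ w̃^{μλ₁…λ_{M-1}} v^{ρ₁}_{λ₁} ⋯ v^{ρ_{M-1}}_{λ_{M-1}} w_{ρ₁…ρ_{M-1}ν}`. -/
theorem stmt_9 {K H : Type*} [Field K] [Ring H] [HopfAlgebra K H]
    {n m : ℕ} (hn : 2 ≤ n) (hm : 1 ≤ m)
    (wc wt : (Fin (m + 1) → Fin n) → K)
    (hwt : ∀ μ ν : Fin n,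
      ∑ l : Fin m → Fin n, wt (Fin.cons μ l) * wc (Fin.snoc l ν)
        = if μ = ν then 1 else 0)
    (v : Fin n → Fin n → H)
    (hcomul : ∀ μ ν : Fin n,
      Coalgebra.comul (R := K) (v μ ν) = ∑ lam : Fin n, v μ lam ⊗ₜ[K] v lam ν)
    (hcounit : ∀ μ ν : Fin n,
      Coalgebra.counit (R := K) (v μ ν) = if μ = ν then (1 : K) else 0)
    (hpres : ∀ ls : Fin (m + 1) → Fin n,
      ∑ ρs : Fin (m + 1) → Fin n,
        wc ρs • (List.ofFn fun i => v (ρs i) (ls i)).prod = wc ls • (1 : H)) :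
    ∀ μ ν : Fin n,
      HopfAlgebra.antipode (R := K) (v μ ν)
        = ∑ l : Fin m → Fin n, ∑ ρ : Fin m → Fin n,
            (wt (Fin.cons μ l) * wc (Fin.snoc ρ ν)) •
              (List.ofFn fun i => v (ρ i) (l i)).prod := by
  intro μ ν
  set T : Fin n → Fin n → H := fun a b =>
    ∑ l : Fin m → Fin n, ∑ ρ : Fin m → Fin n,
      (wt (Fin.cons a l) * wc (Fin.snoc ρ b)) •
        (List.ofFn fun i => v (ρ i) (l i)).prod with hT
  -- inner reindexing lemma
  have hinner : ∀ (l : Fin m → Fin n) (b : Fin n),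
      ∑ lam : Fin n, ∑ ρ : Fin m → Fin n,
        wc (Fin.snoc ρ lam) • ((List.ofFn fun i => v (ρ i) (l i)).prod * v lam b)
        = wc (Fin.snoc l b) • (1 : H) := by
    intro l b
    rw [← hpres (Fin.snoc l b)]
    have hps : (∑ lam : Fin n, ∑ ρ : Fin m → Fin n,
        wc (Fin.snoc ρ lam) • ((List.ofFn fun i => v (ρ i) (l i)).prod * v lam b))
        = ∑ p : Fin n × (Fin m → Fin n),
            wc (Fin.snoc p.2 p.1) • ((List.ofFn fun i => v (p.2 i) (l i)).prod * v p.1 b) :=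
      (Fintype.sum_prod_type (f := fun p : Fin n × (Fin m → Fin n) =>
        wc (Fin.snoc p.2 p.1) • ((List.ofFn fun i => v (p.2 i) (l i)).prod * v p.1 b))).symm
    rw [hps]
    refine Fintype.sum_equiv (Fin.snocEquiv (fun _ => Fin n)) _ _ fun p => ?_
    obtain ⟨lam, ρ⟩ := p
    have he : (Fin.snocEquiv (fun _ => Fin n) (lam, ρ)) = Fin.snoc ρ lam := rfl
    rw [he]
    congr 1
    rw [List.ofFn_succ']
    simp [Fin.snoc_castSucc, Fin.snoc_last]
  -- T is a left convolution inverse of v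
  have hTv : ∀ a b : Fin n,
      ∑ lam : Fin n, T a lam * v lam b = (if a = b then (1 : K) else 0) • (1 : H) := by
    intro a b
    have : ∑ lam : Fin n, T a lam * v lam b
        = ∑ l : Fin m → Fin n, wt (Fin.cons a l) •
            (∑ lam : Fin n, ∑ ρ : Fin m → Fin n,
              wc (Fin.snoc ρ lam) • ((List.ofFn fun i => v (ρ i) (l i)).prod * v lam b)) := by
      rw [hT]
      simp only [Finset.sum_mul, Finset.smul_sum, smul_mul_assoc, mul_smul]
      rw [Finset.sum_comm]
    rw [this]
    have := hwt a b
    calc ∑ l : Fin m → Fin n, wt (Fin.cons a l) •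
            (∑ lam : Fin n, ∑ ρ : Fin m → Fin n,
              wc (Fin.snoc ρ lam) • ((List.ofFn fun i => v (ρ i) (l i)).prod * v lam b))
        = ∑ l : Fin m → Fin n, (wt (Fin.cons a l) * wc (Fin.snoc l b)) • (1 : H) := by
          refine Finset.sum_congr rfl fun l _ => ?_
          rw [hinner l b, smul_smul]
      _ = (if a = b then (1 : K) else 0) • (1 : H) := by
          rw [← Finset.sum_smul, hwt a b]
  -- the right antipode identity from the Hopf axiom
  have hvS : ∀ a b : Fin n,
      ∑ lam : Fin n, v a lam * HopfAlgebra.antipode (R := K) (v lam b)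
        = (if a = b then (1 : K) else 0) • (1 : H) := by
    intro a b
    have h := HopfAlgebra.mul_antipode_lTensor_comul_apply (R := K) (v a b)
    rw [hcomul a b, hcounit a b, map_sum, map_sum] at h
    simp only [LinearMap.lTensor_tmul, LinearMap.mul'_apply] at h
    rw [h, Algebra.algebraMap_eq_smul_one]
  -- main computation
  have step1 : HopfAlgebra.antipode (R := K) (v μ ν)
      = ∑ lam : Fin n, ((if μ = lam then (1 : K) else 0) • (1 : H)) *
          HopfAlgebra.antipode (R := K) (v lam ν) := by
    simp [ite_smul, Finset.sum_ite_eq]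
  rw [step1]
  have step2 : ∀ lam : Fin n,
      ((if μ = lam then (1 : K) else 0) • (1 : H)) *
          HopfAlgebra.antipode (R := K) (v lam ν)
        = (∑ ρ : Fin n, T μ ρ * v ρ lam) * HopfAlgebra.antipode (R := K) (v lam ν) := by
    intro lam; rw [hTv μ lam]
  rw [Finset.sum_congr rfl fun lam _ => step2 lam]
  calc ∑ lam : Fin n, (∑ ρ : Fin n, T μ ρ * v ρ lam) * HopfAlgebra.antipode (R := K) (v lam ν)
      = ∑ ρ : Fin n, T μ ρ *
          (∑ lam : Fin n, v ρ lam * HopfAlgebra.antipode (R := K) (v lam ν)) := by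
        simp only [Finset.sum_mul, Finset.mul_sum, mul_assoc]
        rw [Finset.sum_comm]
    _ = ∑ ρ : Fin n, T μ ρ * ((if ρ = ν then (1 : K) else 0) • (1 : H)) := by
        refine Finset.sum_congr rfl fun ρ _ => ?_
        rw [hvS ρ ν]
    _ = T μ ν := by
        simp [ite_smul, mul_ite, Finset.sum_ite_eq']
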